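/- Let k ≥ 2 be an integer. Then ∑_{x=1}^{N} d_{k}(x)² ≪_k N (log N)^{k²-1} for N ≥ 2, where d_k(x) is the number of ordered factorizations x = a₁⋯a_k into k positive integers. -/

import Mathlib

open Finset

lemma split_prod : ∀ (n : ℕ) (v : Fin n → ℕ) (a : ℕ), a ∣ ∏ j, v j →
    ∃ d : Fin n → ℕ, (∀ j, d j ∣ v j) ∧ ∏ j, d j = a := by
  intro n
  induction n with
  | zero =>
    intro v a h
    simp only [Finset.univ_eq_empty, Finset.prod_empty, Nat.dvd_one] at h
    exact ⟨fun j => 1, fun j => one_dvd _, by simp [h]⟩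
  | succ n ih =>
    intro v a h
    rw [Fin.prod_univ_succ] at h
    obtain ⟨d₁, d₂, hd₁, hd₂, rfl⟩ := exists_dvd_and_dvd_of_dvd_mul h
    obtain ⟨d', hd', hprod⟩ := ih (fun i => v i.succ) d₂ hd₂
    refine ⟨Fin.cons d₁ d', ?_, ?_⟩
    · intro j
      refine Fin.cases ?_ ?_ j
      · simpa using hd₁
      · intro i; simpa using hd' i
    · rw [Fin.prod_univ_succ]
      simp [hprod]

lemma exists_refine : ∀ (m : ℕ) {n : ℕ} (u : Fin m → ℕ) (v : Fin n → ℕ),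
    (∀ i, u i ≠ 0) → (∏ i, u i = ∏ j, v j) →
    ∃ c : Fin m → Fin n → ℕ, (∀ i, ∏ j, c i j = u i) ∧ (∀ j, ∏ i, c i j = v j) := by
  intro m
  induction m with
  | zero =>
    intro n u v _ h
    simp only [Finset.univ_eq_empty, Finset.prod_empty] at h
    refine ⟨Fin.elim0, fun i => Fin.elim0 i, fun j => ?_⟩
    simp only [Finset.univ_eq_empty, Finset.prod_empty]
    exact (Nat.eq_one_of_dvd_one (h ▸ Finset.dvd_prod_of_mem v (Finset.mem_univ j))).symm
  | succ m ih =>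
    intro n u v hu h
    have h0 : u 0 ∣ ∏ j, v j := h ▸ Finset.dvd_prod_of_mem u (Finset.mem_univ 0)
    obtain ⟨d, hd, hdp⟩ := split_prod n v (u 0) h0
    set v' : Fin n → ℕ := fun j => v j / d j with hv'
    have hdv : ∀ j, d j * v' j = v j := fun j => Nat.mul_div_cancel' (hd j)
    have hprod : u 0 * ∏ j, v' j = u 0 * ∏ i : Fin m, u i.succ := by
      calc u 0 * ∏ j, v' j = (∏ j, d j) * ∏ j, v' j := by rw [hdp]
        _ = ∏ j, (d j * v' j) := (Finset.prod_mul_distrib).symm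
        _ = ∏ j, v j := by simp_rw [hdv]
        _ = ∏ i, u i := h.symm
        _ = u 0 * ∏ i : Fin m, u i.succ := Fin.prod_univ_succ u
    have h' : ∏ i : Fin m, u i.succ = ∏ j, v' j :=
      (Nat.eq_of_mul_eq_mul_left (Nat.pos_of_ne_zero (hu 0)) hprod).symm
    obtain ⟨c', hrow, hcol⟩ := ih (fun i => u i.succ) v' (fun i => hu i.succ) h'
    refine ⟨Fin.cons d c', ?_, ?_⟩
    · intro i
      refine Fin.cases ?_ ?_ i
      · simpa using hdp
      · intro i; simpa using hrow i
    · intro j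
      rw [Fin.prod_univ_succ]
      simp only [Fin.cons_succ, Fin.cons_zero]
      rw [hcol j, hdv j]

lemma key_sq (k x : ℕ) (hx : 1 ≤ x) :
    ((Fintype.piFinset fun _ : Fin k => Finset.Icc 1 x).filter fun v => ∏ i, v i = x).card ^ 2 ≤
    ((Fintype.piFinset fun _ : Fin (k ^ 2) => Finset.Icc 1 x).filter
        fun v => ∏ i, v i = x).card := by
  classical
  set A := (Fintype.piFinset fun _ : Fin k => Finset.Icc 1 x).filter fun v => ∏ i, v i = x with hA
  set B := (Fintype.piFinset fun _ : Fin (k ^ 2) => Finset.Icc 1 x).filter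
      fun v => ∏ i, v i = x with hB
  have hAmem : ∀ w ∈ A, (∀ i, w i ≠ 0) ∧ ∏ i, w i = x := by
    intro w hw
    rw [hA, Finset.mem_filter, Fintype.mem_piFinset] at hw
    exact ⟨fun i => by have := hw.1 i; rw [Finset.mem_Icc] at this; omega, hw.2⟩
  let e : Fin k × Fin k ≃ Fin (k ^ 2) := finProdFinEquiv.trans (finCongr (pow_two k).symm)
  let P : (Fin k → ℕ) × (Fin k → ℕ) → Prop :=
    fun uv => (∀ i, uv.1 i ≠ 0) ∧ ∏ i, uv.1 i = ∏ i, uv.2 i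
  let f : ((Fin k → ℕ) × (Fin k → ℕ)) → (Fin (k ^ 2) → ℕ) := fun uv =>
    if h : P uv then
      fun p => (exists_refine k uv.1 uv.2 h.1 h.2).choose (e.symm p).1 (e.symm p).2
    else fun _ => 0
  have hP : ∀ uv ∈ A ×ˢ A, P uv := by
    intro uv huv
    rw [Finset.mem_product] at huv
    have h1 := hAmem _ huv.1
    have h2 := hAmem _ huv.2
    exact ⟨h1.1, by rw [h1.2, h2.2]⟩
  have hfval : ∀ uv (h : P uv) (i j : Fin k),
      f uv (e (i, j)) = (exists_refine k uv.1 uv.2 h.1 h.2).choose i j := by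
    intro uv h i j
    simp only [f, dif_pos h, Equiv.symm_apply_apply]
  rw [sq, ← Finset.card_product]
  apply Finset.card_le_card_of_injOn f
  · intro uv huv
    have h := hP uv huv
    rw [Finset.mem_coe, Finset.mem_product] at huv
    have hu := hAmem _ huv.1
    have hv := hAmem _ huv.2
    obtain ⟨hrow, hcol⟩ := (exists_refine k uv.1 uv.2 h.1 h.2).choose_spec
    set c := (exists_refine k uv.1 uv.2 h.1 h.2).choose with hc
    have hfp : ∀ p : Fin (k ^ 2), f uv p = c (e.symm p).1 (e.symm p).2 := by
      intro p; simp only [f, dif_pos h]; rfl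
    rw [Finset.mem_coe, hB, Finset.mem_filter, Fintype.mem_piFinset]
    constructor
    · intro p
      rw [hfp p]
      set i := (e.symm p).1; set j := (e.symm p).2
      have hdvd : c i j ∣ uv.1 i := hrow i ▸ Finset.dvd_prod_of_mem _ (Finset.mem_univ j)
      have hdx : c i j ∣ x := hdvd.trans (hu.2 ▸ Finset.dvd_prod_of_mem _ (Finset.mem_univ i))
      rw [Finset.mem_Icc]
      refine ⟨?_, Nat.le_of_dvd hx hdx⟩
      have : c i j ≠ 0 := by
        intro h0
        apply hu.1 i
        rw [← hrow i]
        exact Finset.prod_eq_zero (Finset.mem_univ j) h0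
      omega
    · calc ∏ p, f uv p = ∏ p, c (e.symm p).1 (e.symm p).2 := by simp_rw [hfp]
        _ = ∏ q : Fin k × Fin k, c q.1 q.2 := Equiv.prod_comp e.symm (fun q : Fin k × Fin k => c q.1 q.2)
        _ = ∏ i, ∏ j, c i j := Fintype.prod_prod_type (f := fun q => c q.1 q.2)
        _ = ∏ i, uv.1 i := by simp_rw [hrow]
        _ = x := hu.2
  · intro uv huv uv' huv' hfe
    have h := hP uv huv
    have h' := hP uv' huv'
    obtain ⟨hrow, hcol⟩ := (exists_refine k uv.1 uv.2 h.1 h.2).choose_spec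
    obtain ⟨hrow', hcol'⟩ := (exists_refine k uv'.1 uv'.2 h'.1 h'.2).choose_spec
    have hcc : ∀ i j, (exists_refine k uv.1 uv.2 h.1 h.2).choose i j =
        (exists_refine k uv'.1 uv'.2 h'.1 h'.2).choose i j := by
      intro i j
      rw [← hfval uv h i j, ← hfval uv' h' i j, hfe]
    have h1 : uv.1 = uv'.1 := by
      funext i
      rw [← hrow i, ← hrow' i]
      exact Finset.prod_congr rfl fun j _ => hcc i j
    have h2 : uv.2 = uv'.2 := by
      funext j
      rw [← hcol j, ← hcol' j]
      exact Finset.prod_congr rfl fun i _ => hcc i j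
    exact Prod.ext h1 h2

lemma sum_eq_card (m N : ℕ) (hN : 1 ≤ N) :
    ∑ x ∈ Finset.Icc 1 N, ((Fintype.piFinset fun _ : Fin m => Finset.Icc 1 x).filter
      fun v => ∏ i, v i = x).card =
    ((Fintype.piFinset fun _ : Fin m => Finset.Icc 1 N).filter fun v => ∏ i, v i ≤ N).card := by
  classical
  set T := (Fintype.piFinset fun _ : Fin m => Finset.Icc 1 N).filter fun v => ∏ i, v i ≤ N with hT
  have hfib : ∀ v ∈ T, (∏ i, v i) ∈ Finset.Icc 1 N := by
    intro v hv
    rw [hT, Finset.mem_filter, Fintype.mem_piFinset] at hv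
    rw [Finset.mem_Icc]
    refine ⟨Finset.one_le_prod' fun i _ => ?_, hv.2⟩
    have := hv.1 i; rw [Finset.mem_Icc] at this; exact this.1
  rw [Finset.card_eq_sum_card_fiberwise hfib]
  refine Finset.sum_congr rfl fun x hx => ?_
  rw [Finset.mem_Icc] at hx
  congr 1
  ext v
  simp only [hT, Finset.mem_filter, Fintype.mem_piFinset, Finset.mem_Icc]
  constructor
  · rintro ⟨h1, h2⟩
    exact ⟨⟨fun i => ⟨(h1 i).1, le_trans (h1 i).2 hx.2⟩, h2 ▸ hx.2⟩, h2⟩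
  · rintro ⟨⟨h1, hle⟩, h2⟩
    refine ⟨fun i => ⟨(h1 i).1, ?_⟩, h2⟩
    have : v i ∣ ∏ j, v j := Finset.dvd_prod_of_mem v (Finset.mem_univ i)
    rw [h2] at this
    exact Nat.le_of_dvd hx.1 this

lemma count_bound : ∀ (m N : ℕ), 1 ≤ N →
    ((((Fintype.piFinset fun _ : Fin (m + 1) => Finset.Icc 1 N).filter
        fun v => ∏ i, v i ≤ N).card : ℝ))
      ≤ N * (1 + Real.log N) ^ m := by
  intro m
  induction m with
  | zero =>
    intro N hN
    have h1 : (((Fintype.piFinset fun _ : Fin 1 => Finset.Icc 1 N).filter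
        fun v => ∏ i, v i ≤ N).card) ≤ N := by
      calc _ ≤ (Fintype.piFinset fun _ : Fin 1 => Finset.Icc 1 N).card :=
            Finset.card_filter_le _ _
        _ = N := by simp [Fintype.card_piFinset]
    rw [pow_zero, mul_one]
    exact_mod_cast h1
  | succ m ih =>
    intro N hN
    set T := (Fintype.piFinset fun _ : Fin (m + 2) => Finset.Icc 1 N).filter
      fun v => ∏ i, v i ≤ N with hT
    have hfib : ∀ v ∈ T, v 0 ∈ Finset.Icc 1 N := by
      intro v hv
      rw [hT, Finset.mem_filter, Fintype.mem_piFinset] at hv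
      exact hv.1 0
    have hcard : T.card = ∑ a ∈ Finset.Icc 1 N, (T.filter fun v => v 0 = a).card :=
      Finset.card_eq_sum_card_fiberwise hfib
    have hlogN : 0 ≤ Real.log N := Real.log_natCast_nonneg N
    have hfiber : ∀ a ∈ Finset.Icc 1 N, ((T.filter fun v => v 0 = a).card : ℝ) ≤
        (N : ℝ) / a * (1 + Real.log N) ^ m := by
      intro a ha
      rw [Finset.mem_Icc] at ha
      have ha0 : 0 < a := ha.1
      have hNa : 1 ≤ N / a := (Nat.one_le_div_iff ha0).mpr ha.2
      have step1 : (T.filter fun v => v 0 = a).card ≤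
          ((Fintype.piFinset fun _ : Fin (m + 1) => Finset.Icc 1 (N / a)).filter
            fun v => ∏ i, v i ≤ N / a).card := by
        apply Finset.card_le_card_of_injOn (fun v => Fin.tail v)
        · intro v hv
          rw [Finset.mem_coe, Finset.mem_filter] at hv
          obtain ⟨hvT, hv0⟩ := hv
          rw [hT, Finset.mem_filter, Fintype.mem_piFinset] at hvT
          have hpos : ∀ i, 1 ≤ v i := fun i => ((Finset.mem_Icc.mp (hvT.1 i)).1)
          have hsplit : v 0 * ∏ i : Fin (m + 1), Fin.tail v i = ∏ i, v i :=
            (Fin.prod_univ_succ v).symm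
          have htail : ∏ i : Fin (m + 1), Fin.tail v i ≤ N / a := by
            rw [Nat.le_div_iff_mul_le ha0, mul_comm]
            rw [← hv0]
            rw [hsplit]
            exact hvT.2
          rw [Finset.mem_coe, Finset.mem_filter, Fintype.mem_piFinset]
          refine ⟨fun i => ?_, htail⟩
          rw [Finset.mem_Icc]
          refine ⟨hpos _, le_trans ?_ htail⟩
          exact Finset.single_le_prod' (fun j _ => hpos _) (Finset.mem_univ i)
        · intro v hv v' hv' htl
          rw [Finset.coe_filter, Set.mem_setOf_eq] at hv hv'
          funext i
          refine Fin.cases ?_ ?_ i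
          · rw [hv.2, hv'.2]
          · intro j
            exact congrFun htl j
      calc ((T.filter fun v => v 0 = a).card : ℝ)
          ≤ (((Fintype.piFinset fun _ : Fin (m + 1) => Finset.Icc 1 (N / a)).filter
            fun v => ∏ i, v i ≤ N / a).card : ℝ) := by exact_mod_cast step1
        _ ≤ (N / a : ℕ) * (1 + Real.log (N / a : ℕ)) ^ m := ih (N / a) hNa
        _ ≤ (N : ℝ) / a * (1 + Real.log N) ^ m := by
            apply mul_le_mul (Nat.cast_div_le)
            · apply pow_le_pow_left₀
              · positivity
              · have : ((N / a : ℕ) : ℝ) ≤ (N : ℝ) := by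
                  exact_mod_cast Nat.div_le_self N a
                have hlog := Real.log_le_log (by exact_mod_cast hNa) this
                linarith
            · positivity
            · positivity
    have hharm : ∑ a ∈ Finset.Icc 1 N, ((a : ℝ))⁻¹ ≤ 1 + Real.log N := by
      have := harmonic_le_one_add_log N
      have heq : ((harmonic N : ℚ) : ℝ) = ∑ a ∈ Finset.Icc 1 N, ((a : ℝ))⁻¹ := by
        rw [harmonic_eq_sum_Icc]
        push_cast
        rfl
      linarith [heq ▸ this]
    calc (T.card : ℝ) = ∑ a ∈ Finset.Icc 1 N, ((T.filter fun v => v 0 = a).card : ℝ) := by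
          rw [hcard]; push_cast; rfl
      _ ≤ ∑ a ∈ Finset.Icc 1 N, (N : ℝ) / a * (1 + Real.log N) ^ m :=
          Finset.sum_le_sum hfiber
      _ = (N : ℝ) * (1 + Real.log N) ^ m * ∑ a ∈ Finset.Icc 1 N, ((a : ℝ))⁻¹ := by
          rw [Finset.mul_sum]
          refine Finset.sum_congr rfl fun a _ => ?_
          field_simp
      _ ≤ (N : ℝ) * (1 + Real.log N) ^ m * (1 + Real.log N) := by
          apply mul_le_mul_of_nonneg_left hharm
          positivity
      _ = (N : ℝ) * (1 + Real.log N) ^ (m + 1) := by ring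

theorem divisor_function_square_mean (k : ℕ) (hk : 2 ≤ k) :
    ∃ C > 0, ∀ N : ℕ, 2 ≤ N →
      (∑ x ∈ Finset.Icc 1 N,
          (((Fintype.piFinset fun _ : Fin k => Finset.Icc 1 x).filter
              fun v => ∏ i, v i = x).card : ℝ) ^ 2) ≤
        C * N * Real.log N ^ (k ^ 2 - 1) := by
  obtain ⟨m, hm⟩ : ∃ m, k ^ 2 = m + 1 :=
    ⟨k ^ 2 - 1, (Nat.succ_pred_eq_of_pos (by positivity)).symm⟩
  refine ⟨3 ^ m, by positivity, fun N hN => ?_⟩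
  have hN1 : 1 ≤ N := le_trans (by norm_num) hN
  have hlog2 : (1 : ℝ) / 2 ≤ Real.log N := by
    have h2 : Real.log 2 ≤ Real.log N := by
      apply Real.log_le_log (by norm_num)
      exact_mod_cast hN
    linarith [Real.log_two_gt_d9]
  have hlogN : 0 ≤ Real.log N := by linarith
  calc (∑ x ∈ Finset.Icc 1 N,
          (((Fintype.piFinset fun _ : Fin k => Finset.Icc 1 x).filter
              fun v => ∏ i, v i = x).card : ℝ) ^ 2)
      ≤ ∑ x ∈ Finset.Icc 1 N,
          (((Fintype.piFinset fun _ : Fin (k ^ 2) => Finset.Icc 1 x).filter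
              fun v => ∏ i, v i = x).card : ℝ) := by
        refine Finset.sum_le_sum fun x hx => ?_
        rw [Finset.mem_Icc] at hx
        exact_mod_cast key_sq k x hx.1
    _ = (((Fintype.piFinset fun _ : Fin (k ^ 2) => Finset.Icc 1 N).filter
          fun v => ∏ i, v i ≤ N).card : ℝ) := by
        rw [← sum_eq_card (k ^ 2) N hN1]
        push_cast
        rfl
    _ ≤ (N : ℝ) * (1 + Real.log N) ^ m := by
        have hgen : ∀ K : ℕ, K = m + 1 →
            (((Fintype.piFinset fun _ : Fin K => Finset.Icc 1 N).filter
              fun v => ∏ i, v i ≤ N).card : ℝ) ≤ (N : ℝ) * (1 + Real.log N) ^ m := by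
          rintro K rfl
          exact count_bound m N hN1
        exact hgen (k ^ 2) hm
    _ ≤ (N : ℝ) * (3 * Real.log N) ^ m := by
        apply mul_le_mul_of_nonneg_left _ (by positivity)
        apply pow_le_pow_left₀ (by linarith)
        linarith
    _ = 3 ^ m * (N : ℝ) * Real.log N ^ m := by rw [mul_pow]; ring
    _ = 3 ^ m * (N : ℝ) * Real.log N ^ (k ^ 2 - 1) := by rw [hm]; norm_num
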